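/- As t → ∞, H(2H−1) e^{−2θt} ∫_0^t ∫_0^t e^{θs} e^{θr} |s−r|^{2H−2} dr ds converges to HΓ(2H)/θ^{2H}. -/

import Mathlib

open MeasureTheory Real Filter Set Topology

noncomputable def ggg (a θ : ℝ) (s : ℝ) : ℝ := ∫ u in (0:ℝ)..s, u ^ a * Real.exp (-(θ * u))
noncomputable def mmm (a θ : ℝ) (s : ℝ) : ℝ := ∫ u in (0:ℝ)..s, u ^ a * Real.exp (θ * u)

lemma aux_contOn (a c : ℝ) :
    ContinuousOn (fun u : ℝ => u ^ a * Real.exp (c * u)) (Ioi 0) := fun y hy =>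
  (((Real.continuousAt_rpow_const y a (Or.inl (ne_of_gt hy))).mul
    (Real.continuous_exp.comp (continuous_const.mul continuous_id)).continuousAt)).continuousWithinAt

lemma aux_smaf (a c : ℝ) {x : ℝ} (hx : 0 < x) :
    StronglyMeasurableAtFilter (fun u : ℝ => u ^ a * Real.exp (c * u)) (nhds x) volume :=
  AEStronglyMeasurable.stronglyMeasurableAtFilter_of_mem
    ((aux_contOn a c).aestronglyMeasurable measurableSet_Ioi) (Ioi_mem_nhds hx)

lemma aux_intInt {a : ℝ} (ha : -1 < a) (c p q : ℝ) :
    IntervalIntegrable (fun u : ℝ => u ^ a * Real.exp (c * u)) volume p q :=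
  (intervalIntegral.intervalIntegrable_rpow' ha).mul_continuousOn
    (Continuous.continuousOn (by fun_prop))

lemma aux_intIntNeg {a : ℝ} (ha : -1 < a) (θ p q : ℝ) :
    IntervalIntegrable (fun u : ℝ => u ^ a * Real.exp (-(θ * u))) volume p q := by
  simpa [neg_mul] using aux_intInt ha (-θ) p q

lemma ggg_cont {a θ : ℝ} (ha : -1 < a) : Continuous (ggg a θ) :=
  intervalIntegral.continuous_primitive (fun p q => aux_intIntNeg ha θ p q) 0

lemma mmm_cont {a θ : ℝ} (ha : -1 < a) : Continuous (mmm a θ) :=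
  intervalIntegral.continuous_primitive (fun p q => aux_intInt ha θ p q) 0

lemma ggg_deriv {a θ : ℝ} (ha : -1 < a) {x : ℝ} (hx : 0 < x) :
    HasDerivAt (ggg a θ) (x ^ a * Real.exp (-(θ * x))) x := by
  apply intervalIntegral.integral_hasDerivAt_right (aux_intIntNeg ha θ 0 x)
    (by simpa [neg_mul] using aux_smaf a (-θ) hx)
  exact ((Real.continuousAt_rpow_const x a (Or.inl hx.ne')).mul (by fun_prop))

lemma mmm_deriv {a θ : ℝ} (ha : -1 < a) {x : ℝ} (hx : 0 < x) :
    HasDerivAt (mmm a θ) (x ^ a * Real.exp (θ * x)) x := by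
  apply intervalIntegral.integral_hasDerivAt_right (aux_intInt ha θ 0 x) (aux_smaf a θ hx)
  exact ((Real.continuousAt_rpow_const x a (Or.inl hx.ne')).mul (by fun_prop))

lemma ggg_zero (a θ : ℝ) : ggg a θ 0 = 0 := intervalIntegral.integral_same
lemma mmm_zero (a θ : ℝ) : mmm a θ 0 = 0 := intervalIntegral.integral_same

lemma ggg_tendsto {a θ : ℝ} (ha : -1 < a) (hθ : 0 < θ) :
    Tendsto (ggg a θ) atTop (𝓝 ((1/θ) ^ (a+1) * Real.Gamma (a+1))) := by
  have hInt : IntegrableOn (fun u : ℝ => u ^ a * Real.exp (-(θ * u))) (Ioi 0) := by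
    have := integrableOn_rpow_mul_exp_neg_mul_rpow ha (zero_lt_one' ℝ) hθ
    simpa [Real.rpow_one, neg_mul] using this
  have h := intervalIntegral_tendsto_integral_Ioi 0 hInt tendsto_id
  have hval : ∫ u in Ioi (0:ℝ), u ^ a * Real.exp (-(θ * u)) = (1/θ) ^ (a+1) * Real.Gamma (a+1) := by
    have := Real.integral_rpow_mul_exp_neg_mul_Ioi (a := a+1) (r := θ) (by linarith) hθ
    simpa [add_sub_cancel_right] using this
  rw [show ggg a θ = fun t => ∫ u in (0:ℝ)..t, u ^ a * Real.exp (-(θ * u)) from rfl, ← hval]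
  exact h

lemma intA {a θ : ℝ} (ha : -1 < a) (hθ : 0 < θ) {t : ℝ} (ht : 0 < t) :
    ∫ s in (0:ℝ)..t, Real.exp (2*θ*s) * ggg a θ s
      = (Real.exp (2*θ*t) * ggg a θ t - mmm a θ t) / (2*θ) := by
  have hcont : ContinuousOn (fun s => (Real.exp (2*θ*s) * ggg a θ s - mmm a θ s) / (2*θ)) (Icc 0 t) := by
    apply Continuous.continuousOn
    exact (((Real.continuous_exp.comp (by fun_prop)).mul (ggg_cont ha)).sub (mmm_cont ha)).div_const _
  have hderiv : ∀ x ∈ Ioo (0:ℝ) t,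
      HasDerivWithinAt (fun s => (Real.exp (2*θ*s) * ggg a θ s - mmm a θ s) / (2*θ))
        (Real.exp (2*θ*x) * ggg a θ x) (Ioi x) x := by
    intro x hx
    have h1 : HasDerivAt (fun s : ℝ => Real.exp (2*θ*s)) (2*θ*Real.exp (2*θ*x)) x := by
      have := ((hasDerivAt_id x).const_mul (2*θ)).exp
      simpa [mul_comm] using this
    have h := (((h1.mul (ggg_deriv (θ := θ) ha hx.1)).sub (mmm_deriv (θ := θ) ha hx.1)).div_const (2*θ))
    have hexp : Real.exp (2*θ*x) * Real.exp (-(θ*x)) = Real.exp (θ*x) := by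
      rw [← Real.exp_add]; ring_nf
    refine h.hasDerivWithinAt.congr_deriv (Eq.symm ?_)
    rw [eq_div_iff (by positivity : (2*θ) ≠ 0)]
    linear_combination (-(x ^ a)) * hexp
  have hint : IntervalIntegrable (fun s => Real.exp (2*θ*s) * ggg a θ s) volume 0 t :=
    (Continuous.intervalIntegrable (by exact (Real.continuous_exp.comp (by fun_prop)).mul (ggg_cont ha)) _ _)
  have := intervalIntegral.integral_eq_sub_of_hasDeriv_right_of_le ht.le hcont hderiv hint
  rw [this, ggg_zero, mmm_zero]
  ring

lemma intB {a θ : ℝ} (ha : -1 < a) (hθ : 0 < θ) {t : ℝ} (ht : 0 < t) :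
    ∫ s in (0:ℝ)..t, Real.exp (-(2*θ*s)) * mmm a θ s
      = (ggg a θ t - Real.exp (-(2*θ*t)) * mmm a θ t) / (2*θ) := by
  have hcont : ContinuousOn (fun s => (ggg a θ s - Real.exp (-(2*θ*s)) * mmm a θ s) / (2*θ)) (Icc 0 t) := by
    apply Continuous.continuousOn
    exact ((ggg_cont ha).sub ((Real.continuous_exp.comp (by fun_prop)).mul (mmm_cont ha))).div_const _
  have hderiv : ∀ x ∈ Ioo (0:ℝ) t,
      HasDerivWithinAt (fun s => (ggg a θ s - Real.exp (-(2*θ*s)) * mmm a θ s) / (2*θ))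
        (Real.exp (-(2*θ*x)) * mmm a θ x) (Ioi x) x := by
    intro x hx
    have h1 : HasDerivAt (fun s : ℝ => Real.exp (-(2*θ*s))) (-(2*θ)*Real.exp (-(2*θ*x))) x := by
      have := ((hasDerivAt_id x).const_mul (-(2*θ))).exp
      simpa [mul_comm, neg_mul] using this
    have h := (((ggg_deriv (θ := θ) ha hx.1).sub (h1.mul (mmm_deriv (θ := θ) ha hx.1))).div_const (2*θ))
    have hexp : Real.exp (-(2*θ*x)) * Real.exp (θ*x) = Real.exp (-(θ*x)) := by
      rw [← Real.exp_add]; ring_nf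
    refine h.hasDerivWithinAt.congr_deriv (Eq.symm ?_)
    rw [eq_div_iff (by positivity : (2*θ) ≠ 0)]
    linear_combination (x ^ a) * hexp
  have hint : IntervalIntegrable (fun s => Real.exp (-(2*θ*s)) * mmm a θ s) volume 0 t :=
    (Continuous.intervalIntegrable (by exact (Real.continuous_exp.comp (by fun_prop)).mul (mmm_cont ha)) _ _)
  have := intervalIntegral.integral_eq_sub_of_hasDeriv_right_of_le ht.le hcont hderiv hint
  rw [this, ggg_zero, mmm_zero]
  ring

lemma habs {a : ℝ} (ha : -1 < a) : ∀ p q : ℝ, IntervalIntegrable (fun x : ℝ => |x| ^ a) volume p q := by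
  have base : ∀ c : ℝ, 0 ≤ c → IntervalIntegrable (fun x : ℝ => |x| ^ a) volume 0 c := by
    intro c hc
    apply (intervalIntegral.intervalIntegrable_rpow' ha (a := 0) (b := c)).congr_ae
    rw [uIoc_of_le hc]
    filter_upwards [ae_restrict_mem measurableSet_Ioc] with x hx
    rw [abs_of_pos hx.1]
  have baseall : ∀ c : ℝ, IntervalIntegrable (fun x : ℝ => |x| ^ a) volume 0 c := by
    intro c
    rcases le_or_gt 0 c with hc | hc
    · exact base c hc
    · have h := (IntervalIntegrable.iff_comp_neg (f := fun x : ℝ => |x| ^ a) (a := 0) (b := -c)).mp (base (-c) (by linarith))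
      simpa [abs_neg] using h
  intro p q
  exact (baseall p).symm.trans (baseall q)

lemma hker {a : ℝ} (ha : -1 < a) (θ s p q : ℝ) :
    IntervalIntegrable (fun r => Real.exp (θ*s) * Real.exp (θ*r) * |s - r| ^ a) volume p q := by
  have h1 : IntervalIntegrable (fun r : ℝ => |s - r| ^ a) volume p q := by
    have := (habs ha (s - p) (s - q)).comp_sub_left s
    simpa using this
  exact h1.continuousOn_mul (Continuous.continuousOn (by fun_prop))

lemma inner_eq {a θ : ℝ} (ha : -1 < a) {t s : ℝ} (hs0 : 0 ≤ s) (hst : s ≤ t) :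
    ∫ r in (0:ℝ)..t, Real.exp (θ*s) * Real.exp (θ*r) * |s - r| ^ a
      = Real.exp (2*θ*s) * ggg a θ s + Real.exp (2*θ*s) * mmm a θ (t - s) := by
  rw [← intervalIntegral.integral_add_adjacent_intervals (hker ha θ s 0 s) (hker ha θ s s t)]
  congr 1
  · set C := Real.exp (θ*s) * Real.exp (θ*s) with hC
    have heq : EqOn (fun r => Real.exp (θ*s) * Real.exp (θ*r) * |s - r| ^ a)
        (fun r => (fun u : ℝ => u ^ a * Real.exp (-(θ*u)) * C) (s - r)) (uIcc 0 s) := by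
      intro r hr
      rw [uIcc_of_le hs0] at hr
      simp only [hC]
      rw [abs_of_nonneg (by linarith [hr.2] : (0:ℝ) ≤ s - r)]
      have hexp : Real.exp (-(θ*(s-r))) * (Real.exp (θ*s) * Real.exp (θ*s)) = Real.exp (θ*s) * Real.exp (θ*r) := by
        rw [← Real.exp_add, ← Real.exp_add, ← Real.exp_add]; ring_nf
      calc Real.exp (θ*s) * Real.exp (θ*r) * (s-r) ^ a
          = (s-r) ^ a * (Real.exp (-(θ*(s-r))) * (Real.exp (θ*s) * Real.exp (θ*s))) := by rw [hexp]; ring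
        _ = (s-r) ^ a * Real.exp (-(θ*(s-r))) * (Real.exp (θ*s) * Real.exp (θ*s)) := by ring
    rw [intervalIntegral.integral_congr heq,
      intervalIntegral.integral_comp_sub_left (fun u : ℝ => u ^ a * Real.exp (-(θ*u)) * C) s]
    rw [sub_self, sub_zero, intervalIntegral.integral_mul_const]
    have : C = Real.exp (2*θ*s) := by rw [hC, ← Real.exp_add]; ring_nf
    rw [this, ggg]; ring
  · set C := Real.exp (θ*s) * Real.exp (θ*s) with hC
    have heq : EqOn (fun r => Real.exp (θ*s) * Real.exp (θ*r) * |s - r| ^ a)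
        (fun r => (fun u : ℝ => u ^ a * Real.exp (θ*u) * C) (r - s)) (uIcc s t) := by
      intro r hr
      rw [uIcc_of_le hst] at hr
      simp only [hC]
      rw [abs_sub_comm, abs_of_nonneg (by linarith [hr.1] : (0:ℝ) ≤ r - s)]
      have hexp : Real.exp (θ*(r-s)) * (Real.exp (θ*s) * Real.exp (θ*s)) = Real.exp (θ*s) * Real.exp (θ*r) := by
        rw [← Real.exp_add, ← Real.exp_add, ← Real.exp_add]; ring_nf
      calc Real.exp (θ*s) * Real.exp (θ*r) * (r-s) ^ a
          = (r-s) ^ a * (Real.exp (θ*(r-s)) * (Real.exp (θ*s) * Real.exp (θ*s))) := by rw [hexp]; ring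
        _ = (r-s) ^ a * Real.exp (θ*(r-s)) * (Real.exp (θ*s) * Real.exp (θ*s)) := by ring
    rw [intervalIntegral.integral_congr heq,
      intervalIntegral.integral_comp_sub_right (fun u : ℝ => u ^ a * Real.exp (θ*u) * C) s]
    rw [sub_self, intervalIntegral.integral_mul_const]
    have : C = Real.exp (2*θ*s) := by rw [hC, ← Real.exp_add]; ring_nf
    rw [this, mmm]; ring

lemma key {a θ : ℝ} (ha : -1 < a) (hθ : 0 < θ) {t : ℝ} (ht : 0 < t) :
    Real.exp (-(2*θ*t)) * ∫ s in (0:ℝ)..t, ∫ r in (0:ℝ)..t,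
        Real.exp (θ*s) * Real.exp (θ*r) * |s - r| ^ a
      = (ggg a θ t - Real.exp (-(2*θ*t)) * mmm a θ t) / θ := by
  have h1 : (∫ s in (0:ℝ)..t, ∫ r in (0:ℝ)..t, Real.exp (θ*s) * Real.exp (θ*r) * |s - r| ^ a)
      = ∫ s in (0:ℝ)..t, (Real.exp (2*θ*s) * ggg a θ s + Real.exp (2*θ*s) * mmm a θ (t - s)) := by
    apply intervalIntegral.integral_congr
    intro s hs
    rw [uIcc_of_le ht.le] at hs
    exact inner_eq ha hs.1 hs.2
  have hint1 : IntervalIntegrable (fun s => Real.exp (2*θ*s) * ggg a θ s) volume 0 t :=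
    Continuous.intervalIntegrable ((Real.continuous_exp.comp (by fun_prop)).mul (ggg_cont ha)) _ _
  have hint2 : IntervalIntegrable (fun s => Real.exp (2*θ*s) * mmm a θ (t - s)) volume 0 t :=
    Continuous.intervalIntegrable ((Real.continuous_exp.comp (by fun_prop)).mul
      ((mmm_cont ha).comp (continuous_const.sub continuous_id))) _ _
  have h3 : (∫ s in (0:ℝ)..t, Real.exp (2*θ*s) * mmm a θ (t - s))
      = Real.exp (2*θ*t) * ((ggg a θ t - Real.exp (-(2*θ*t)) * mmm a θ t) / (2*θ)) := by
    have ha1 : (∫ s in (0:ℝ)..t, Real.exp (2*θ*s) * mmm a θ (t - s))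
        = ∫ s in (0:ℝ)..t, (fun u : ℝ => Real.exp (2*θ*(t - u)) * mmm a θ u) (t - s) := by
      apply intervalIntegral.integral_congr
      intro s _
      simp [sub_sub_cancel]
    rw [ha1, intervalIntegral.integral_comp_sub_left (fun u : ℝ => Real.exp (2*θ*(t - u)) * mmm a θ u) t,
      sub_self, sub_zero]
    have ha2 : (∫ u in (0:ℝ)..t, Real.exp (2*θ*(t - u)) * mmm a θ u)
        = ∫ u in (0:ℝ)..t, Real.exp (2*θ*t) * (Real.exp (-(2*θ*u)) * mmm a θ u) := by
      apply intervalIntegral.integral_congr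
      intro u _
      simp only
      rw [← mul_assoc, ← Real.exp_add]
      ring_nf
    rw [ha2, intervalIntegral.integral_const_mul, intB ha hθ ht]
  rw [h1, intervalIntegral.integral_add hint1 hint2, intA ha hθ ht, h3]
  have hE : Real.exp (-(2*θ*t)) = (Real.exp (2*θ*t))⁻¹ := Real.exp_neg _
  rw [hE]
  have hE0 : Real.exp (2*θ*t) ≠ 0 := (Real.exp_pos _).ne'
  field_simp
  ring

lemma hm0 {a θ : ℝ} (ha : -1 < a) (hθ : 0 < θ) :
    Tendsto (fun t => Real.exp (-(2*θ*t)) * mmm a θ t) atTop (𝓝 0) := by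
  have ha1 : (0:ℝ) < a + 1 := by linarith
  apply squeeze_zero' (g := fun t => (t ^ (a+1) * Real.exp (-θ*t)) / (a+1))
  · filter_upwards [eventually_ge_atTop (0:ℝ)] with t ht
    have : 0 ≤ mmm a θ t := by
      apply intervalIntegral.integral_nonneg ht
      intro u hu
      have : (0:ℝ) ≤ u ^ a := Real.rpow_nonneg hu.1 a
      positivity
    positivity
  · filter_upwards [eventually_ge_atTop (0:ℝ)] with t ht
    have hm_le : mmm a θ t ≤ t ^ (a+1) / (a+1) * Real.exp (θ*t) := by
      have h1 : mmm a θ t ≤ ∫ u in (0:ℝ)..t, u ^ a * Real.exp (θ*t) := by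
        apply intervalIntegral.integral_mono_on ht (aux_intInt ha θ 0 t)
          ((intervalIntegral.intervalIntegrable_rpow' ha).mul_const _)
        intro u hu
        exact mul_le_mul_of_nonneg_left
          (Real.exp_le_exp.2 (mul_le_mul_of_nonneg_left hu.2 hθ.le))
          (Real.rpow_nonneg hu.1 a)
      rw [intervalIntegral.integral_mul_const, integral_rpow (Or.inl ha),
        Real.zero_rpow ha1.ne'] at h1
      calc mmm a θ t ≤ (t ^ (a+1) - 0) / (a+1) * Real.exp (θ*t) := h1
        _ = t ^ (a+1) / (a+1) * Real.exp (θ*t) := by ring_nf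
    calc Real.exp (-(2*θ*t)) * mmm a θ t
        ≤ Real.exp (-(2*θ*t)) * (t ^ (a+1) / (a+1) * Real.exp (θ*t)) :=
          mul_le_mul_of_nonneg_left hm_le (Real.exp_pos _).le
      _ = t ^ (a+1) * (Real.exp (-(2*θ*t)) * Real.exp (θ*t)) / (a+1) := by ring
      _ = (t ^ (a+1) * Real.exp (-θ*t)) / (a+1) := by
          rw [← Real.exp_add, show -(2*θ*t) + θ*t = -θ*t from by ring]
  · have := (tendsto_rpow_mul_exp_neg_mul_atTop_nhds_zero (a+1) θ hθ).div_const (a+1)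
    simpa using this

/-- For `1/2 < H < 1` and `θ > 0`, as `t → ∞`,
`H(2H−1) e^{−2θt} ∫_0^t ∫_0^t e^{θs} e^{θr} |s−r|^{2H−2} dr ds → HΓ(2H)/θ^{2H}`. -/
theorem double_integral_exp_tendsto
    (H θ : ℝ) (hH1 : 1 / 2 < H) (hH2 : H < 1) (hθ : 0 < θ) :
    Tendsto (fun t : ℝ =>
        H * (2 * H - 1) * Real.exp (-2 * θ * t) *
          ∫ s in (0:ℝ)..t, ∫ r in (0:ℝ)..t,
            Real.exp (θ * s) * Real.exp (θ * r) * |s - r| ^ (2 * H - 2))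
      atTop (nhds (H * Real.Gamma (2 * H) / θ ^ (2 * H))) := by
  have ha : (-1:ℝ) < 2 * H - 2 := by linarith
  set a : ℝ := 2 * H - 2 with hadef
  have hg := ggg_tendsto (θ := θ) ha hθ
  have hm := hm0 (θ := θ) ha hθ
  have hlim := ((hg.sub hm).div_const θ).const_mul (H * (2 * H - 1))
  have hval : H * (2 * H - 1) * (((1/θ) ^ (a+1) * Real.Gamma (a+1) - 0) / θ)
      = H * Real.Gamma (2 * H) / θ ^ (2 * H) := by
    have h1 : a + 1 = 2 * H - 1 := by rw [hadef]; ring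
    rw [h1, sub_zero]
    have hΓ : Real.Gamma (2 * H) = (2 * H - 1) * Real.Gamma (2 * H - 1) := by
      have h2 := Real.Gamma_add_one (s := 2 * H - 1) (by linarith)
      rw [show (2 * H - 1 + 1 : ℝ) = 2 * H from by ring] at h2
      exact h2
    have hpow : θ ^ (2 * H) = θ ^ (2 * H - 1) * θ := by
      calc θ ^ (2 * H) = θ ^ (2 * H - 1 + 1) := by norm_num
        _ = θ ^ (2 * H - 1) * θ ^ (1:ℝ) := Real.rpow_add hθ _ _
        _ = θ ^ (2 * H - 1) * θ := by rw [Real.rpow_one]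
    have hinv : ((1:ℝ)/θ) ^ (2 * H - 1) = (θ ^ (2 * H - 1))⁻¹ := by
      rw [one_div, Real.inv_rpow hθ.le]
    rw [hΓ, hpow, hinv]
    have hθp : (0:ℝ) < θ ^ (2 * H - 1) := Real.rpow_pos_of_pos hθ _
    field_simp
  rw [← hval]
  apply Tendsto.congr' _ hlim
  filter_upwards [eventually_gt_atTop (0:ℝ)] with t ht
  have hk := key (θ := θ) ha hθ ht
  have hexp : Real.exp (-2 * θ * t) = Real.exp (-(2*θ*t)) := by
    rw [show (-2 * θ * t : ℝ) = -(2*θ*t) from by ring]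
  rw [← hk, hexp]
  ring
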